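/- For the 2D color code, let M be any subset of faces of the 2-colex (a codimension-0 submanifold with boundary, disjoint from any boundary of the 2-colex). Then for each α ∈ {X, Z} and any two distinct colors u, v, the product ∏_{f⊂M, K(f)=u} G^α_f · ∏_{f⊂M, K(f)=v} G^α_f equals an operator h_{∂M} that is a product of single-qubit α operators supported only on vertices lying on the boundary of M (vertices belonging both to a face in M and to a face not in M). Consequently the total parity of u- and v-colored flipped plaquettes inside M equals the eigenvalue of the boundary operator h_{∂M}: N_u + N_v = ⟨h_{∂M}⟩ (mod 2). -/

import Mathlib

/-!
# Statement 15

For the 2D color code, let `M` be any subset of faces of the 2-colex.  Then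
for each `α ∈ {X, Z}` and any two distinct colors `u, v`, the product
`∏_{f⊂M, K(f)=u} G^α_f ⬝ ∏_{f⊂M, K(f)=v} G^α_f` equals an operator `h_{∂M}`
that is a product of single-qubit `α` operators supported only on vertices
lying on the boundary of `M` (vertices belonging both to a face in `M` and to
a face not in `M`).  Consequently the total parity of `u`- and `v`-colored
flipped plaquettes inside `M` equals the eigenvalue of the boundary operator
`h_{∂M}`: `N_u + N_v = ⟨h_{∂M}⟩ (mod 2)`.
-/

/-- A Pauli operator (modulo phase) on qubits indexed by `Q`, given by the
supports of its `X` and `Z` parts. -/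
structure Pauli (Q : Type*) [DecidableEq Q] where
  X : Finset Q
  Z : Finset Q

namespace Pauli

variable {Q : Type*} [DecidableEq Q]

instance : One (Pauli Q) := ⟨⟨∅, ∅⟩⟩
instance : Mul (Pauli Q) := ⟨fun P R => ⟨symmDiff P.X R.X, symmDiff P.Z R.Z⟩⟩

theorem mul_def (P R : Pauli Q) : P * R = ⟨symmDiff P.X R.X, symmDiff P.Z R.Z⟩ := rfl
theorem one_def : (1 : Pauli Q) = ⟨∅, ∅⟩ := rfl

/-- Pauli operators modulo phase form a commutative monoid (in fact an
elementary abelian 2-group). -/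
instance : CommMonoid (Pauli Q) where
  mul_assoc a b c := by simp [mul_def, symmDiff_assoc]
  one_mul a := by cases a; simp [mul_def, one_def, ← Finset.bot_eq_empty]
  mul_one a := by cases a; simp [mul_def, one_def, ← Finset.bot_eq_empty]
  mul_comm a b := by simp [mul_def, symmDiff_comm]

/-- Pauli X on a single qubit. -/
def Xop (q : Q) : Pauli Q := ⟨{q}, ∅⟩
/-- Pauli Z on a single qubit. -/
def Zop (q : Q) : Pauli Q := ⟨∅, {q}⟩
/-- The product of Pauli X over a finite set of qubits. -/
def XOn (S : Finset Q) : Pauli Q := ⟨S, ∅⟩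
/-- The product of Pauli Z over a finite set of qubits. -/
def ZOn (S : Finset Q) : Pauli Q := ⟨∅, S⟩
/-- The support of a Pauli operator. -/
def supp (P : Pauli Q) : Finset Q := P.X ∪ P.Z

/-- The symplectic form: `omega P R = 0` iff the two Pauli operators commute
(as actual operators, for any choice of phases), and `omega P R = 1` iff they
anticommute. -/
def omega (P R : Pauli Q) : ZMod 2 :=
  ((P.X ∩ R.Z).card : ZMod 2) + ((R.X ∩ P.Z).card : ZMod 2)

end Pauli
/-- A (closed) 2-colex: a 3-valent cellulation of a closed 2-dimensional
surface whose faces are 3-colorable, so that each vertex belongs to exactly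
one face of each of the three colors.  A qubit lives on each vertex. -/
structure TwoColex where
  /-- vertices (qubits) -/
  V : Type
  [deqV : DecidableEq V] [finV : Fintype V]
  /-- faces -/
  Fc : Type
  [deqF : DecidableEq Fc] [finF : Fintype Fc]
  /-- the color of a face (`A`, `B`, `C`) -/
  color : Fc → Fin 3
  /-- the vertices of a face -/
  verts : Fc → Finset V
  /-- each vertex belongs to exactly one face of each color -/
  vertex_face : ∀ (v : V) (c : Fin 3), ∃! f : Fc, color f = c ∧ v ∈ verts f

attribute [instance] TwoColex.deqV TwoColex.finV TwoColex.deqF TwoColex.finF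

namespace TwoColex

variable (M : TwoColex)

/-- The face operator `G^X_f = ∏_{v ∈ f} X_v`. -/
def GX (f : M.Fc) : Pauli M.V := Pauli.XOn (M.verts f)

/-- The face operator `G^Z_f = ∏_{v ∈ f} Z_v`. -/
def GZ (f : M.Fc) : Pauli M.V := Pauli.ZOn (M.verts f)

/-- The number of flipped `X`-type plaquettes of color `u` in the excited
state created by the Pauli error `P` (a plaquette is flipped iff its face
operator anticommutes with `P`). -/
def NX (u : Fin 3) (P : Pauli M.V) : ℕ :=
  (Finset.univ.filter fun f : M.Fc => M.color f = u ∧ Pauli.omega (M.GX f) P = 1).card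

/-- The number of flipped `Z`-type plaquettes of color `u` in the excited
state created by the Pauli error `P`. -/
def NZ (u : Fin 3) (P : Pauli M.V) : ℕ :=
  (Finset.univ.filter fun f : M.Fc => M.color f = u ∧ Pauli.omega (M.GZ f) P = 1).card

end TwoColex

namespace TwoColex

variable (M : TwoColex)

/-- The boundary vertices of a region `R` of faces: vertices belonging both to
a face in `R` and to a face not in `R`. -/
def bdryVerts (R : Finset M.Fc) : Finset M.V :=
  Finset.univ.filter fun w =>
    (∃ f ∈ R, w ∈ M.verts f) ∧ (∃ f : M.Fc, f ∉ R ∧ w ∈ M.verts f)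

/-- The number of flipped `X`-type plaquettes of color `u` inside the region
`R`, in the excited state created by the Pauli error `P`. -/
def NXin (R : Finset M.Fc) (u : Fin 3) (P : Pauli M.V) : ℕ :=
  (R.filter fun f => M.color f = u ∧ Pauli.omega (M.GX f) P = 1).card

/-- The number of flipped `Z`-type plaquettes of color `u` inside the region
`R`. -/
def NZin (R : Finset M.Fc) (u : Fin 3) (P : Pauli M.V) : ℕ :=
  (R.filter fun f => M.color f = u ∧ Pauli.omega (M.GZ f) P = 1).card

section Aux

variable {Q : Type*} [DecidableEq Q] {I : Type*} [DecidableEq I]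

lemma card_symmDiff_zmod (A B : Finset Q) :
    (((symmDiff A B).card : ZMod 2)) = (A.card : ZMod 2) + B.card := by
  have h : (symmDiff A B).card = (A \ B).card + (B \ A).card := by
    rw [symmDiff_def, Finset.sup_eq_union, Finset.card_union_of_disjoint disjoint_sdiff_sdiff]
  have hA := Finset.card_sdiff_add_card_inter A B
  have hB := Finset.card_sdiff_add_card_inter B A
  have key : (symmDiff A B).card + ((A ∩ B).card + (B ∩ A).card) = A.card + B.card := by
    omega
  have hc := congrArg (fun n : ℕ => (n : ZMod 2)) key
  push_cast at hc
  rw [Finset.inter_comm B A] at hc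
  have h0 : ((A ∩ B).card : ZMod 2) + (A ∩ B).card = 0 := by
    rw [← two_mul, show (2 : ZMod 2) = 0 from rfl, zero_mul]
  linear_combination hc - h0

lemma pomega_one (P : Pauli Q) : Pauli.omega 1 P = 0 := by
  simp [Pauli.omega, Pauli.one_def]

lemma pomega_mul_left (a b P : Pauli Q) :
    Pauli.omega (a * b) P = Pauli.omega a P + Pauli.omega b P := by
  have h1 : (symmDiff a.X b.X) ∩ P.Z = symmDiff (a.X ∩ P.Z) (b.X ∩ P.Z) :=
    inf_symmDiff_distrib_right a.X b.X P.Z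
  have h2 : P.X ∩ (symmDiff a.Z b.Z) = symmDiff (P.X ∩ a.Z) (P.X ∩ b.Z) :=
    inf_symmDiff_distrib_left P.X a.Z b.Z
  simp only [Pauli.omega, Pauli.mul_def]
  rw [h1, h2, card_symmDiff_zmod, card_symmDiff_zmod]
  ring

lemma pomega_prod (S : Finset I) (g : I → Pauli Q) (P : Pauli Q) :
    Pauli.omega (∏ i ∈ S, g i) P = ∑ i ∈ S, Pauli.omega (g i) P := by
  classical
  induction S using Finset.induction with
  | empty => simp [pomega_one]
  | insert _ _ h ih =>
    rw [Finset.prod_insert h, Finset.sum_insert h, pomega_mul_left, ih]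

lemma pmem_prod_X (S : Finset I) (g : I → Pauli Q) (x : Q) :
    x ∈ (∏ i ∈ S, g i).X ↔ Odd (S.filter fun i => x ∈ (g i).X).card := by
  classical
  induction S using Finset.induction with
  | empty => simp [Pauli.one_def]
  | @insert a S h ih =>
    rw [Finset.prod_insert h, Finset.filter_insert]
    by_cases hx : x ∈ (g a).X
    · rw [if_pos hx, Finset.card_insert_of_notMem (fun hc => h (Finset.mem_of_mem_filter a hc)),
        Nat.odd_add_one, ← ih]
      simp only [Pauli.mul_def, Finset.mem_symmDiff]
      tauto
    · rw [if_neg hx, ← ih]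
      simp only [Pauli.mul_def, Finset.mem_symmDiff]
      tauto

lemma pmem_prod_Z (S : Finset I) (g : I → Pauli Q) (x : Q) :
    x ∈ (∏ i ∈ S, g i).Z ↔ Odd (S.filter fun i => x ∈ (g i).Z).card := by
  classical
  induction S using Finset.induction with
  | empty => simp [Pauli.one_def]
  | @insert a S h ih =>
    rw [Finset.prod_insert h, Finset.filter_insert]
    by_cases hx : x ∈ (g a).Z
    · rw [if_pos hx, Finset.card_insert_of_notMem (fun hc => h (Finset.mem_of_mem_filter a hc)),
        Nat.odd_add_one, ← ih]
      simp only [Pauli.mul_def, Finset.mem_symmDiff]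
      tauto
    · rw [if_neg hx, ← ih]
      simp only [Pauli.mul_def, Finset.mem_symmDiff]
      tauto

lemma sum_zmod_eq_card_filter (S : Finset I) (g : I → ZMod 2) :
    ∑ i ∈ S, g i = ((S.filter fun i => g i = 1).card : ZMod 2) := by
  classical
  rw [← Finset.sum_boole]
  refine Finset.sum_congr rfl fun i _ => ?_
  have : ∀ x : ZMod 2, x = if x = 1 then 1 else 0 := by decide
  exact this (g i)

end Aux

lemma face_filter (M : TwoColex) (R : Finset M.Fc) (c : Fin 3) (x : M.V)
    (f0 : M.Fc) (hf0 : M.color f0 = c ∧ x ∈ M.verts f0)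
    (huniq : ∀ g, (M.color g = c ∧ x ∈ M.verts g) → g = f0) :
    ((R.filter fun f => M.color f = c).filter fun f => x ∈ M.verts f)
      = if f0 ∈ R then {f0} else ∅ := by
  ext g
  by_cases hR : f0 ∈ R
  · rw [if_pos hR]
    simp only [Finset.mem_filter, Finset.mem_singleton]
    constructor
    · rintro ⟨⟨hg, hc⟩, hx⟩
      exact huniq g ⟨hc, hx⟩
    · rintro rfl
      exact ⟨⟨hR, hf0.1⟩, hf0.2⟩
  · rw [if_neg hR]
    simp only [Finset.notMem_empty, iff_false, Finset.mem_filter, not_and]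
    rintro ⟨hg, hc⟩ hx
    exact hR (huniq g ⟨hc, hx⟩ ▸ hg)

lemma GX_X (M : TwoColex) (f : M.Fc) : (M.GX f).X = M.verts f := rfl
lemma GX_Z (M : TwoColex) (f : M.Fc) : (M.GX f).Z = ∅ := rfl
lemma GZ_X (M : TwoColex) (f : M.Fc) : (M.GZ f).X = ∅ := rfl
lemma GZ_Z (M : TwoColex) (f : M.Fc) : (M.GZ f).Z = M.verts f := rfl

lemma prod_GX_Z (M : TwoColex) (S : Finset M.Fc) : (∏ f ∈ S, M.GX f).Z = ∅ := by
  ext x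
  simp [pmem_prod_Z, GX_Z]

lemma prod_GZ_X (M : TwoColex) (S : Finset M.Fc) : (∏ f ∈ S, M.GZ f).X = ∅ := by
  ext x
  simp [pmem_prod_X, GZ_X]

lemma mem_prod_color_X (M : TwoColex) (R : Finset M.Fc) (c : Fin 3) (x : M.V) :
    x ∈ (∏ f ∈ R.filter fun f => M.color f = c, M.GX f).X ↔
      ∃ f0 : M.Fc, M.color f0 = c ∧ x ∈ M.verts f0 ∧ f0 ∈ R := by
  obtain ⟨f0, hf0, huniq⟩ := M.vertex_face x c
  have hff := face_filter M R c x f0 hf0 (fun g hg => huniq g hg)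
  rw [pmem_prod_X]
  simp only [GX_X]
  erw [hff]
  by_cases hR : f0 ∈ R
  · rw [if_pos hR]
    simp only [Finset.card_singleton]
    exact ⟨fun _ => ⟨f0, hf0.1, hf0.2, hR⟩, fun _ => odd_one⟩
  · rw [if_neg hR]
    simp only [Finset.card_empty]
    constructor
    · intro h
      exact absurd h (by decide)
    · rintro ⟨g, hgc, hgx, hgR⟩
      exact absurd (huniq g ⟨hgc, hgx⟩ ▸ hgR) hR

lemma mem_prod_color_Z (M : TwoColex) (R : Finset M.Fc) (c : Fin 3) (x : M.V) :
    x ∈ (∏ f ∈ R.filter fun f => M.color f = c, M.GZ f).Z ↔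
      ∃ f0 : M.Fc, M.color f0 = c ∧ x ∈ M.verts f0 ∧ f0 ∈ R := by
  obtain ⟨f0, hf0, huniq⟩ := M.vertex_face x c
  have hff := face_filter M R c x f0 hf0 (fun g hg => huniq g hg)
  rw [pmem_prod_Z]
  simp only [GZ_Z]
  erw [hff]
  by_cases hR : f0 ∈ R
  · rw [if_pos hR]
    simp only [Finset.card_singleton]
    exact ⟨fun _ => ⟨f0, hf0.1, hf0.2, hR⟩, fun _ => odd_one⟩
  · rw [if_neg hR]
    simp only [Finset.card_empty]
    constructor
    · intro h
      exact absurd h (by decide)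
    · rintro ⟨g, hgc, hgx, hgR⟩
      exact absurd (huniq g ⟨hgc, hgx⟩ ▸ hgR) hR

lemma pmul_X {Q : Type*} [DecidableEq Q] (P R : Pauli Q) :
    (P * R).X = symmDiff P.X R.X := rfl
lemma pmul_Z {Q : Type*} [DecidableEq Q] (P R : Pauli Q) :
    (P * R).Z = symmDiff P.Z R.Z := rfl

lemma bdry_aux (M : TwoColex) (R : Finset M.Fc) (u v : Fin 3) (x : M.V)
    (hxu : ∃ f0 : M.Fc, M.color f0 = u ∧ x ∈ M.verts f0 ∧ f0 ∈ R)
    (hxv : ¬ ∃ f0 : M.Fc, M.color f0 = v ∧ x ∈ M.verts f0 ∧ f0 ∈ R) :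
    x ∈ M.bdryVerts R := by
  obtain ⟨f, hfc, hfx, hfR⟩ := hxu
  obtain ⟨g0, hg0, _⟩ := M.vertex_face x v
  have hg0R : g0 ∉ R := fun h => hxv ⟨g0, hg0.1, hg0.2, h⟩
  simp only [bdryVerts, Finset.mem_filter, Finset.mem_univ, true_and]
  exact ⟨⟨f, hfR, hfx⟩, ⟨g0, hg0R, hg0.2⟩⟩

/-- The emergent 0-form symmetry of the 2D color code as a
Gauss law: the two-color product of face operators over a region `R` is an
operator supported on the boundary of `R`, whose eigenvalue measures the
parity of the enclosed topological charge. -/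
theorem color_code_gauss_law (M : TwoColex) (R : Finset M.Fc)
    (u v : Fin 3) (huv : u ≠ v) :
    -- the X-type two-color product over `R` is a product of single-qubit X
    -- operators supported on the boundary of `R` ...
    ((∏ f ∈ R.filter fun f => M.color f = u, M.GX f) *
        (∏ f ∈ R.filter fun f => M.color f = v, M.GX f)).Z = ∅ ∧
    ((∏ f ∈ R.filter fun f => M.color f = u, M.GX f) *
        (∏ f ∈ R.filter fun f => M.color f = v, M.GX f)).X ⊆ M.bdryVerts R ∧
    -- ... and its eigenvalue in the excited state created by any error `P`
    -- measures the enclosed charge: `N_u + N_v = ⟨h_∂R⟩ (mod 2)`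
    (∀ P : Pauli M.V,
      ((M.NXin R u P : ZMod 2) + (M.NXin R v P : ZMod 2)) =
        Pauli.omega
          ((∏ f ∈ R.filter fun f => M.color f = u, M.GX f) *
            (∏ f ∈ R.filter fun f => M.color f = v, M.GX f)) P) ∧
    -- the Z-type statements:
    ((∏ f ∈ R.filter fun f => M.color f = u, M.GZ f) *
        (∏ f ∈ R.filter fun f => M.color f = v, M.GZ f)).X = ∅ ∧
    ((∏ f ∈ R.filter fun f => M.color f = u, M.GZ f) *
        (∏ f ∈ R.filter fun f => M.color f = v, M.GZ f)).Z ⊆ M.bdryVerts R ∧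
    (∀ P : Pauli M.V,
      ((M.NZin R u P : ZMod 2) + (M.NZin R v P : ZMod 2)) =
        Pauli.omega
          ((∏ f ∈ R.filter fun f => M.color f = u, M.GZ f) *
            (∏ f ∈ R.filter fun f => M.color f = v, M.GZ f)) P) := by
  refine ⟨?_, ?_, ?_, ?_, ?_, ?_⟩
  · rw [pmul_Z, prod_GX_Z, prod_GX_Z]
    simp
  · intro x hx
    rw [pmul_X] at hx
    rcases Finset.mem_symmDiff.1 hx with ⟨h1, h2⟩ | ⟨h1, h2⟩
    · exact bdry_aux M R u v x ((mem_prod_color_X M R u x).1 h1)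
        (fun h => h2 ((mem_prod_color_X M R v x).2 h))
    · exact bdry_aux M R v u x ((mem_prod_color_X M R v x).1 h1)
        (fun h => h2 ((mem_prod_color_X M R u x).2 h))
  · intro P
    rw [pomega_mul_left, pomega_prod, pomega_prod,
      sum_zmod_eq_card_filter, sum_zmod_eq_card_filter]
    simp only [NXin, Finset.filter_filter]
  · rw [pmul_X, prod_GZ_X, prod_GZ_X]
    simp
  · intro x hx
    rw [pmul_Z] at hx
    rcases Finset.mem_symmDiff.1 hx with ⟨h1, h2⟩ | ⟨h1, h2⟩
    · exact bdry_aux M R u v x ((mem_prod_color_Z M R u x).1 h1)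
        (fun h => h2 ((mem_prod_color_Z M R v x).2 h))
    · exact bdry_aux M R v u x ((mem_prod_color_Z M R v x).1 h1)
        (fun h => h2 ((mem_prod_color_Z M R u x).2 h))
  · intro P
    rw [pomega_mul_left, pomega_prod, pomega_prod,
      sum_zmod_eq_card_filter, sum_zmod_eq_card_filter]
    simp only [NZin, Finset.filter_filter]

end TwoColex
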